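/- Define d : ℕ → ℚ by d(0) = 0, d(1) = 1, d(2N) = d(N), d(2N+1) = (d(N) + d(N+1) + 1)/2. Then d(N) = d(N^R) for all N ≥ 1, where N^R is the binary digit reversal of N. -/

import Mathlib

/-- The binary digit reversal of `n`. -/
def binRev (n : ℕ) : ℕ :=
  ∑ i ∈ Finset.range (Nat.log 2 n + 1),
    if n.testBit (Nat.log 2 n - i) then 2 ^ i else 0

namespace VdcAux

open Finset

/-- bit as a rational -/
def bq (N i : ℕ) : ℚ := if N.testBit i then 1 else 0

def sQ (m N : ℕ) : ℚ := ∑ i ∈ range m, bq N i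

def tQ (m N : ℕ) : ℚ := ∑ i ∈ range m, bq N i / 2 ^ i

def SQ (m N : ℕ) : ℚ :=
  ∑ j ∈ range m, ∑ i ∈ range j, bq N i * bq N j * (2 ^ i / 2 ^ j)

lemma bq_even_zero (M : ℕ) : bq (2 * M) 0 = 0 := by
  simp [bq, Nat.testBit_zero, Nat.mul_mod_right]

lemma bq_odd_zero (M : ℕ) : bq (2 * M + 1) 0 = 1 := by
  simp only [bq, Nat.testBit_zero]
  rw [if_pos]
  simp only [decide_eq_true_eq]
  omega

lemma bq_even_succ (M i : ℕ) : bq (2 * M) (i + 1) = bq M i := by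
  simp [bq, Nat.testBit_add_one, Nat.mul_div_cancel_left M (by norm_num : 0 < 2)]

lemma bq_odd_succ (M i : ℕ) : bq (2 * M + 1) (i + 1) = bq M i := by
  have : (2 * M + 1) / 2 = M := by omega
  simp [bq, Nat.testBit_add_one, this]

lemma sQ_even (m M : ℕ) : sQ (m + 1) (2 * M) = sQ m M := by
  unfold sQ
  rw [Finset.sum_range_succ', bq_even_zero, add_zero]
  exact Finset.sum_congr rfl fun i _ => bq_even_succ M i

lemma sQ_odd (m M : ℕ) : sQ (m + 1) (2 * M + 1) = sQ m M + 1 := by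
  unfold sQ
  rw [Finset.sum_range_succ', bq_odd_zero]
  congr 1
  exact Finset.sum_congr rfl fun i _ => bq_odd_succ M i

lemma tQ_even (m M : ℕ) : tQ (m + 1) (2 * M) = tQ m M / 2 := by
  unfold tQ
  rw [Finset.sum_range_succ', bq_even_zero, Finset.sum_div]
  simp only [zero_div, add_zero]
  refine Finset.sum_congr rfl fun i _ => ?_
  rw [bq_even_succ, pow_succ]
  ring

lemma tQ_odd (m M : ℕ) : tQ (m + 1) (2 * M + 1) = 1 + tQ m M / 2 := by
  unfold tQ
  rw [Finset.sum_range_succ', bq_odd_zero, Finset.sum_div]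
  rw [add_comm]
  congr 1
  · norm_num
  refine Finset.sum_congr rfl fun i _ => ?_
  rw [bq_odd_succ, pow_succ]
  ring

lemma SQ_even (m M : ℕ) : SQ (m + 1) (2 * M) = SQ m M := by
  unfold SQ
  rw [Finset.sum_range_succ']
  simp only [Finset.range_zero, Finset.sum_empty, add_zero]
  refine Finset.sum_congr rfl fun j _ => ?_
  rw [Finset.sum_range_succ', bq_even_zero]
  simp only [mul_zero, zero_mul, add_zero]
  refine Finset.sum_congr rfl fun i _ => ?_
  rw [bq_even_succ, bq_even_succ, pow_succ, pow_succ]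
  ring

lemma SQ_odd (m M : ℕ) : SQ (m + 1) (2 * M + 1) = SQ m M + tQ m M / 2 := by
  unfold SQ tQ
  rw [Finset.sum_range_succ']
  simp only [Finset.range_zero, Finset.sum_empty, add_zero]
  rw [Finset.sum_div, ← Finset.sum_add_distrib]
  refine Finset.sum_congr rfl fun j _ => ?_
  rw [Finset.sum_range_succ', bq_odd_zero]
  congr 1
  · refine Finset.sum_congr rfl fun i _ => ?_
    rw [bq_odd_succ, bq_odd_succ, pow_succ, pow_succ]
    ring
  · rw [bq_odd_succ, pow_succ]
    ring

lemma sQ_stab {m m' N : ℕ} (h : N < 2 ^ m) (hm : m ≤ m') : sQ m' N = sQ m N := by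
  unfold sQ
  refine (Finset.sum_subset (Finset.range_subset_range.2 hm) fun x _ hx => ?_).symm
  have hxm : m ≤ x := by simpa [Finset.mem_range, not_lt] using hx
  have : N < 2 ^ x := lt_of_lt_of_le h (Nat.pow_le_pow_right (by norm_num) hxm)
  simp [bq, Nat.testBit_lt_two_pow this]

lemma SQ_stab {m m' N : ℕ} (h : N < 2 ^ m) (hm : m ≤ m') : SQ m' N = SQ m N := by
  unfold SQ
  refine (Finset.sum_subset (Finset.range_subset_range.2 hm) fun x _ hx => ?_).symm
  have hxm : m ≤ x := by simpa [Finset.mem_range, not_lt] using hx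
  have : N < 2 ^ x := lt_of_lt_of_le h (Nat.pow_le_pow_right (by norm_num) hxm)
  refine Finset.sum_eq_zero fun i _ => ?_
  simp [bq, Nat.testBit_lt_two_pow this]

lemma log_two_mul {M : ℕ} (h : 1 ≤ M) : Nat.log 2 (2 * M) = Nat.log 2 M + 1 := by
  rw [mul_comm]
  exact Nat.log_mul_base (by norm_num) (by omega)

lemma log_two_mul_add_one {M : ℕ} (h : 1 ≤ M) :
    Nat.log 2 (2 * M + 1) = Nat.log 2 M + 1 := by
  have A : 2 ^ Nat.log 2 M ≤ M := Nat.pow_log_le_self 2 (by omega)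
  have B : M < 2 ^ (Nat.log 2 M + 1) := Nat.lt_pow_succ_log_self (by norm_num) M
  refine Nat.log_eq_of_pow_le_of_lt_pow ?_ ?_
  · rw [pow_succ]; omega
  · rw [pow_succ]; omega

lemma testBit_log_self {N : ℕ} (h : 1 ≤ N) : N.testBit (Nat.log 2 N) = true := by
  have A : 2 ^ Nat.log 2 N ≤ N := Nat.pow_log_le_self 2 (by omega)
  have B : N < 2 ^ (Nat.log 2 N + 1) := Nat.lt_pow_succ_log_self (by norm_num) N
  rw [Nat.testBit_eq_decide_div_mod_eq]
  have hdiv : N / 2 ^ Nat.log 2 N = 1 := by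
    refine Nat.div_eq_of_lt_le (by simpa using A) ?_
    rw [pow_succ] at B
    omega
  simp [hdiv]

lemma sum_pow_lt (c : ℕ → Bool) (n : ℕ) :
    (∑ i ∈ range n, if c i then 2 ^ i else 0) < 2 ^ n := by
  induction n with
  | zero => simp
  | succ n ih =>
    rw [Finset.sum_range_succ, pow_succ]
    have : (if c n then 2 ^ n else 0) ≤ 2 ^ n := by split <;> omega
    omega

lemma testBit_sum_pow (c : ℕ → Bool) (n k : ℕ) :
    (∑ i ∈ range n, if c i then 2 ^ i else 0).testBit k
      = if k < n then c k else false := by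
  induction n with
  | zero => simp [Nat.zero_testBit]
  | succ n ih =>
    rw [Finset.sum_range_succ]
    rcases lt_trichotomy k n with hk | rfl | hk
    · by_cases hc : c n
      · rw [if_pos hc, add_comm, Nat.testBit_two_pow_add_gt hk, ih]
        simp [hk, Nat.lt_succ_of_lt hk]
      · rw [if_neg hc, add_zero, ih]
        simp [hk, Nat.lt_succ_of_lt hk]
    · by_cases hc : c k
      · rw [if_pos hc, add_comm, Nat.testBit_two_pow_add_eq,
          Nat.testBit_lt_two_pow (sum_pow_lt c k)]
        simp [hc]
      · rw [if_neg hc, add_zero, Nat.testBit_lt_two_pow (sum_pow_lt c k)]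
        simp [hc]
    · have hlt : (∑ i ∈ range n, if c i then 2 ^ i else 0) + (if c n then 2 ^ n else 0)
          < 2 ^ k := by
        have h1 := sum_pow_lt c (n + 1)
        rw [Finset.sum_range_succ] at h1
        exact lt_of_lt_of_le h1 (Nat.pow_le_pow_right (by norm_num) hk)
      rw [Nat.testBit_lt_two_pow hlt]
      simp [Nat.lt_asymm hk, not_lt_of_gt, show ¬ k < n + 1 by omega]

section

variable (d : ℕ → ℚ) (h1 : d 1 = 1)
  (heven : ∀ N : ℕ, d (2 * N) = d N)
  (hodd : ∀ N : ℕ, d (2 * N + 1) = (d N + d (N + 1) + 1) / 2)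

include h1 heven hodd

lemma aux1 : ∀ N : ℕ, 1 ≤ N → d (N + 1) = d N + 1 - tQ (Nat.log 2 N + 1) N := by
  intro N
  induction N using Nat.strong_induction_on with
  | _ N ih =>
  intro hN
  obtain ⟨M, rfl | rfl⟩ := Nat.even_or_odd' N
  · have hM : 1 ≤ M := by omega
    rw [hodd M, ih M (by omega) hM, heven M, log_two_mul hM, tQ_even]
    ring
  · rcases Nat.eq_zero_or_pos M with rfl | hM
    · have e2 : (2 : ℕ) * 0 + 1 + 1 = 2 * 1 := rfl
      rw [e2, heven 1, h1]
      norm_num [tQ, bq, Nat.log_one_right]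
    · have e2 : 2 * M + 1 + 1 = 2 * (M + 1) := by ring
      rw [e2, heven (M + 1), hodd M, ih M (by omega) hM,
        log_two_mul_add_one hM, tQ_odd]
      ring

lemma aux2 : ∀ N : ℕ, 1 ≤ N →
    d N = sQ (Nat.log 2 N + 1) N - SQ (Nat.log 2 N + 1) N := by
  intro N
  induction N using Nat.strong_induction_on with
  | _ N ih =>
  intro hN
  obtain ⟨M, rfl | rfl⟩ := Nat.even_or_odd' N
  · have hM : 1 ≤ M := by omega
    rw [heven M, ih M (by omega) hM, log_two_mul hM, sQ_even, SQ_even]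
  · rcases Nat.eq_zero_or_pos M with rfl | hM
    · simp only [Nat.mul_zero, Nat.zero_add, h1, Nat.log_one_right]
      have hsq : sQ 1 1 = 1 := by
        unfold sQ
        rw [Finset.sum_range_one]
        have ht : Nat.testBit 1 0 = true := by decide
        simp [bq, ht]
      have hSQ : SQ 1 1 = 0 := by
        unfold SQ
        rw [Finset.sum_range_one]
        simp
      rw [hsq, hSQ]
      norm_num
    · rw [hodd M, aux1 d h1 heven hodd M hM, ih M (by omega) hM,
        log_two_mul_add_one hM, sQ_odd, SQ_odd]
      ring

end

lemma pow_reflect {i j ν : ℕ} (hi : i ≤ ν) (hj : j ≤ ν) :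
    (2 : ℚ) ^ (ν - i) / 2 ^ (ν - j) = 2 ^ j / 2 ^ i := by
  rw [div_eq_div_iff (pow_ne_zero _ two_ne_zero) (pow_ne_zero _ two_ne_zero),
    ← pow_add, ← pow_add]
  congr 1
  omega

lemma SQ_square (m N : ℕ) : SQ m N
    = ∑ j ∈ range m, ∑ i ∈ range m,
        if i < j then bq N i * bq N j * (2 ^ i / 2 ^ j) else 0 := by
  unfold SQ
  refine Finset.sum_congr rfl fun j hj => ?_
  have hjm : j ≤ m := le_of_lt (Finset.mem_range.1 hj)
  have hfil : (Finset.range m).filter (fun i => i < j) = Finset.range j := by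
    ext x
    simp only [Finset.mem_filter, Finset.mem_range]
    omega
  rw [← Finset.sum_filter, hfil]

lemma double_reflect (K : ℕ → ℕ → ℚ) (ν : ℕ) :
    ∑ j ∈ range (ν + 1), ∑ i ∈ range (ν + 1), K i j
      = ∑ j ∈ range (ν + 1), ∑ i ∈ range (ν + 1), K (ν - i) (ν - j) := by
  conv_lhs => rw [← Finset.sum_range_reflect
    (fun j => ∑ i ∈ range (ν + 1), K i j) (ν + 1)]
  simp only [Nat.add_sub_cancel]
  refine Finset.sum_congr rfl fun j _ => ?_
  rw [← Finset.sum_range_reflect (fun i => K i (ν - j)) (ν + 1)]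
  simp only [Nat.add_sub_cancel]

end VdcAux

open VdcAux Finset in
theorem vdc_discrepancy_digit_reversal (d : ℕ → ℚ)
    (h0 : d 0 = 0) (h1 : d 1 = 1)
    (heven : ∀ N : ℕ, d (2 * N) = d N)
    (hodd : ∀ N : ℕ, d (2 * N + 1) = (d N + d (N + 1) + 1) / 2)
    (N : ℕ) (hN : 1 ≤ N) :
    d N = d (binRev N) := by
  set ν := Nat.log 2 N with hν
  have hbit : ∀ k, (binRev N).testBit k = if k < ν + 1 then N.testBit (ν - k) else false :=
    fun k => testBit_sum_pow (fun i => N.testBit (ν - i)) (ν + 1) k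
  have htop : N.testBit ν = true := testBit_log_self hN
  have hR1 : 1 ≤ binRev N := by
    rcases Nat.eq_zero_or_pos (binRev N) with h | h
    · have h0' := hbit 0
      rw [h] at h0'
      simp [Nat.zero_testBit, htop] at h0'
    · exact h
  have hRlt : binRev N < 2 ^ (ν + 1) := sum_pow_lt _ _
  have hRlog : Nat.log 2 (binRev N) + 1 ≤ ν + 1 := by
    have := Nat.log_lt_of_lt_pow (by omega : binRev N ≠ 0) hRlt
    omega
  have hRpow : binRev N < 2 ^ (Nat.log 2 (binRev N) + 1) :=
    Nat.lt_pow_succ_log_self (by norm_num) _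
  have hbq : ∀ i, i < ν + 1 → bq (binRev N) i = bq N (ν - i) := by
    intro i hi
    simp [bq, hbit i, hi]
  rw [aux2 d h1 heven hodd N hN, aux2 d h1 heven hodd _ hR1,
    ← sQ_stab hRpow hRlog, ← SQ_stab hRpow hRlog, ← hν]
  have hs : sQ (ν + 1) (binRev N) = sQ (ν + 1) N := by
    unfold sQ
    have hrefl := Finset.sum_range_reflect (fun i => bq N i) (ν + 1)
    simp only [Nat.add_sub_cancel] at hrefl
    rw [← hrefl]
    exact Finset.sum_congr rfl fun i hi => hbq i (Finset.mem_range.1 hi)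
  have hS : SQ (ν + 1) (binRev N) = SQ (ν + 1) N := by
    rw [SQ_square, SQ_square]
    have e1 : ∑ j ∈ range (ν + 1), ∑ i ∈ range (ν + 1),
          (if i < j then bq (binRev N) i * bq (binRev N) j * (2 ^ i / 2 ^ j) else 0)
        = ∑ j ∈ range (ν + 1), ∑ i ∈ range (ν + 1),
          (if i < j then bq N (ν - i) * bq N (ν - j) * (2 ^ i / 2 ^ j) else 0) := by
      refine Finset.sum_congr rfl fun j hj => Finset.sum_congr rfl fun i hi => ?_
      rw [hbq i (Finset.mem_range.1 hi), hbq j (Finset.mem_range.1 hj)]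
    rw [e1, double_reflect
      (fun i j => if i < j then bq N (ν - i) * bq N (ν - j) * (2 ^ i / 2 ^ j) else 0) ν]
    have e2 : ∀ j ∈ range (ν + 1), ∀ i ∈ range (ν + 1),
        (if ν - i < ν - j then
            bq N (ν - (ν - i)) * bq N (ν - (ν - j)) * (2 ^ (ν - i) / 2 ^ (ν - j)) else 0)
        = (if j < i then bq N j * bq N i * (2 ^ j / 2 ^ i) else 0) := by
      intro j hj i hi
      have hi' : i ≤ ν := by have := Finset.mem_range.1 hi; omega
      have hj' : j ≤ ν := by have := Finset.mem_range.1 hj; omega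
      have hii : ν - (ν - i) = i := by omega
      have hjj : ν - (ν - j) = j := by omega
      by_cases h : j < i
      · rw [if_pos (by omega : ν - i < ν - j), if_pos h, hii, hjj,
          pow_reflect hi' hj']
        ring
      · rw [if_neg (by omega : ¬ ν - i < ν - j), if_neg h]
    rw [Finset.sum_congr rfl fun j hj => Finset.sum_congr rfl fun i hi => e2 j hj i hi]
    rw [Finset.sum_comm]
  rw [hs, hS]
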